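/- Let q = 2^s, F = 𝔽_{q²}, n = 2q², and let (a₁,b₁),…,(a_n,b_n) be an enumeration of all pairs in F × F with b_k² + b_k = a_k^{q+1}. For a nonnegative integer m let C_m ⊆ F^n be the F-linear span of the vectors ((a_k)^i (b_k)^j)_{k=1,…,n} over all pairs (i,j) of nonnegative integers with j ≤ 1 and 2i + (q+1)j ≤ m. For every integer m with q − 1 ≤ m ≤ 2q − 2, the code C_m satisfies simultaneously: (a) C_m ⊆ C_m^{⊥H}; (b) dim_F C_m = m − q/2 + 1; and (c) every nonzero vector of C_m^{⊥H} has Hamming weight at least m − q + 2. (Via the stabilizer construction this yields a q-ary quantum code with parameters [[2q², 2q² − 2m + q − 2, ≥ m + 2 − q]].) -/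

import Mathlib

open Polynomial Finset

lemma aux_sum_rootMult {F : Type} [Field F] [Fintype F] [DecidableEq F] (N : F[X]) :
    ∑ a : F, N.rootMultiplicity a ≤ N.natDegree := by
  calc ∑ a : F, N.rootMultiplicity a = ∑ a : F, N.roots.count a := by
        simp [Polynomial.count_roots]
    _ = ∑ a ∈ N.roots.toFinset, N.roots.count a := by
        refine (Finset.sum_subset (Finset.subset_univ _) ?_).symm
        intro a _ ha
        simp [Multiset.count_eq_zero_of_notMem, Multiset.mem_toFinset.not.mp ha]
    _ = Multiset.card N.roots := Multiset.toFinset_sum_count_eq _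
    _ ≤ N.natDegree := Polynomial.card_roots' N

lemma aux_pow_two_pow {F : Type} [Field F] [CharP F 2] (b c : F) (hb : b ^ 2 + b = c) (j : ℕ) :
    b ^ (2 ^ j) = b + ∑ k ∈ Finset.range j, c ^ (2 ^ k) := by
  have h2 : (2:F) = 0 := by exact_mod_cast CharP.cast_eq_zero F 2
  induction j with
  | zero => simp
  | succ j ih =>
      have hrw : (2:ℕ) ^ (j+1) = 2 ^ j * 2 := by ring
      rw [hrw, pow_mul, ih]
      have hadd : (b + ∑ k ∈ Finset.range j, c ^ 2 ^ k) ^ 2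
          = b ^ 2 + (∑ k ∈ Finset.range j, c ^ 2 ^ k) ^ 2 := add_pow_char _ _ 2
      rw [hadd]
      have hsq : (∑ k ∈ Finset.range j, c ^ 2 ^ k) ^ 2 = ∑ k ∈ Finset.range j, c ^ 2 ^ (k+1) := by
        have hfr := map_sum (frobenius F 2) (fun k => c ^ 2 ^ k) (Finset.range j)
        simp only [frobenius_def] at hfr
        rw [hfr]
        refine Finset.sum_congr rfl fun k _ => ?_
        rw [← pow_mul, ← pow_succ]
      rw [hsq, Finset.sum_range_succ']
      have hb2 : b ^ 2 = b + c := by linear_combination hb - b * h2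
      rw [hb2]
      simp only [pow_zero, pow_one]
      ring

lemma aux_expbound {q i i' : ℕ} (hq : 2 ≤ q) (hi : i + 1 ≤ q) (hi' : i' + 1 ≤ q)
    (hs : i + 2 ≤ q ∨ i' + 2 ≤ q) : i + q * i' + 2 ≤ q * q := by
  rcases hs with h | h
  · have h2 : q * i' + 2 * q ≤ q * q + q := by
      calc q * i' + 2 * q = q * (i' + 1) + q := by ring
        _ ≤ q * q + q := by
            have := Nat.mul_le_mul_left q hi'
            omega
    linarith
  · have h2 : q * i' + 2 * q ≤ q * q := by
      calc q * i' + 2 * q = q * (i' + 2) := by ring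
        _ ≤ q * q := Nat.mul_le_mul_left q h
    linarith

lemma aux_expbound2 {q i i' : ℕ} (h : 2*i + 4 ≤ q) (h' : 2*i' + 4 ≤ q) :
    2*(i + q*i') + (q+1)*q + 4 ≤ 2*(q*q) := by
  have h2 : q * (2*i') + 4 * q ≤ q * q := by
    calc q * (2*i') + 4 * q = q * (2*i' + 4) := by ring
      _ ≤ q * q := Nat.mul_le_mul_left q h'
  have h3 : q * (2*i') = 2*(q*i') := by ring
  have h4 : (q+1)*q = q*q + q := by ring
  linarith

lemma aux_N_ne_zero {F : Type} [Field F] {q : ℕ} (hq : q % 2 = 0) (f0 f1 : F[X])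
    (h : ¬(f0 = 0 ∧ f1 = 0)) : f0 ^ 2 + f0 * f1 + f1 ^ 2 * X ^ (q + 1) ≠ 0 := by
  intro hN
  by_cases h1 : f1 = 0
  · rw [h1] at hN
    simp only [mul_zero, add_zero, zero_pow, zero_mul] at hN
    exact h ⟨by simpa using hN, h1⟩
  by_cases h0 : f0 = 0
  · rw [h0] at hN
    simp at hN
    exact h1 hN
  have hA : f0 * (f0 + f1) = -(f1 ^ 2 * X ^ (q+1)) := by linear_combination hN
  have hRHSne : f1 ^ 2 * X ^ (q+1) ≠ 0 := mul_ne_zero (pow_ne_zero _ h1) (pow_ne_zero _ X_ne_zero)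
  have hf01 : f0 + f1 ≠ 0 := by
    intro hz; rw [hz, mul_zero] at hA; exact hRHSne (neg_eq_zero.mp hA.symm)
  have hdeg : f0.natDegree + (f0 + f1).natDegree = 2 * f1.natDegree + (q + 1) := by
    have := congrArg natDegree hA
    rw [natDegree_mul h0 hf01, natDegree_neg,
      natDegree_mul (pow_ne_zero _ h1) (pow_ne_zero _ X_ne_zero),
      natDegree_pow, natDegree_X_pow] at this
    omega
  set d0 := f0.natDegree with hd0
  set d1 := f1.natDegree with hd1
  rcases lt_trichotomy d0 d1 with hlt | heq | hgt
  · rw [natDegree_add_eq_right_of_natDegree_lt hlt] at hdeg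
    omega
  · have : (f0 + f1).natDegree ≤ d0 := by
      refine (natDegree_add_le _ _).trans ?_
      omega
    omega
  · rw [natDegree_add_eq_left_of_natDegree_lt hgt] at hdeg
    omega

lemma aux_split {F : Type} [Field F] (G : ℕ×ℕ → F) (Mo : Finset (ℕ×ℕ)) {r0 r1 : ℕ}
    (hG : ∀ p ∉ Mo, G p = 0)
    (hM01 : ∀ p ∈ Mo, p.2 = 0 ∨ p.2 = 1)
    (h0 : ∀ p ∈ Mo, p.2 = 0 → p.1 < r0) (h1 : ∀ p ∈ Mo, p.2 = 1 → p.1 < r1)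
    (a b : F) :
    ∑ p ∈ Mo, G p * (a ^ p.1 * b ^ p.2)
      = (∑ i ∈ Finset.range r0, C (G (i,0)) * X^i).eval a
        + (∑ i ∈ Finset.range r1, C (G (i,1)) * X^i).eval a * b := by
  classical
  rw [← Finset.sum_filter_add_sum_filter_not Mo (fun p => p.2 = 0)]
  congr 1
  · have hsub : Mo.filter (fun p => p.2 = 0) ⊆ (Finset.range r0).image (fun i => (i,0)) := by
      intro p hp
      rw [Finset.mem_filter] at hp
      obtain ⟨hp1, hp2⟩ := hp
      rw [Finset.mem_image]
      exact ⟨p.1, Finset.mem_range.mpr (h0 p hp1 hp2), by rw [← hp2]⟩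
    rw [eval_finset_sum]
    refine (Finset.sum_subset hsub ?_).trans ?_
    · intro p hp hnp
      rw [Finset.mem_image] at hp
      obtain ⟨i, _, rfl⟩ := hp
      have : (i, 0) ∉ Mo := by
        intro hmem
        exact hnp (Finset.mem_filter.mpr ⟨hmem, rfl⟩)
      simp [hG _ this]
    · rw [Finset.sum_image (by intro x _ y _ h; simpa using h)]
      refine Finset.sum_congr rfl fun i _ => ?_
      simp
  · have hsub : Mo.filter (fun p => ¬p.2 = 0) ⊆ (Finset.range r1).image (fun i => (i,1)) := by
      intro p hp
      rw [Finset.mem_filter] at hp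
      obtain ⟨hp1, hp2⟩ := hp
      have h2 : p.2 = 1 := (hM01 p hp1).resolve_left hp2
      rw [Finset.mem_image]
      exact ⟨p.1, Finset.mem_range.mpr (h1 p hp1 h2), by rw [← h2]⟩
    rw [eval_finset_sum, Finset.sum_mul]
    refine (Finset.sum_subset hsub ?_).trans ?_
    · intro p hp hnp
      rw [Finset.mem_image] at hp
      obtain ⟨i, _, rfl⟩ := hp
      have : (i, 1) ∉ Mo := by
        intro hmem
        exact hnp (Finset.mem_filter.mpr ⟨hmem, by simp⟩)
      simp [hG _ this]
    · rw [Finset.sum_image (by intro x _ y _ h; simpa using h)]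
      refine Finset.sum_congr rfl fun i _ => ?_
      simp
      ring
theorem first_curve_quantum_code_ingredients (s : ℕ) (hs : 0 < s) (q : ℕ) (hq : q = 2 ^ s)
    (F : Type) [Field F] [Fintype F] (hF : Fintype.card F = q ^ 2)
    (n : ℕ) (hn : n = 2 * q ^ 2)
    (pt : Fin n → F × F) (hinj : Function.Injective pt)
    (hrange : ∀ p : F × F, p ∈ Set.range pt ↔ p.2 ^ 2 + p.2 = p.1 ^ (q + 1))
    (C : ℕ → Submodule F (Fin n → F))
    (hC : ∀ m : ℕ, C m = Submodule.span F
      {v : Fin n → F | ∃ i j : ℕ, j ≤ 1 ∧ 2 * i + (q + 1) * j ≤ m ∧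
        v = fun k => (pt k).1 ^ i * (pt k).2 ^ j})
    (m : ℕ) (hm1 : q - 1 ≤ m) (hm2 : m ≤ 2 * q - 2) :
    (∀ u ∈ C m, ∀ v ∈ C m, ∑ k, u k * (v k) ^ q = 0) ∧
    Module.finrank F (C m) = m - q / 2 + 1 ∧
    (∀ v ∈ {v : Fin n → F | ∀ c ∈ C m, ∑ k, v k * (c k) ^ q = 0}, v ≠ 0 →
      m + 2 - q ≤ Nat.card {k : Fin n // v k ≠ 0}) := by
  classical
  -- basic numerics
  have hq2 : 2 ≤ q := by
    rw [hq]
    calc 2 = 2^1 := (pow_one 2).symm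
    _ ≤ 2^s := Nat.pow_le_pow_right (by norm_num) hs
  have hqeven : q % 2 = 0 := by
    have : (2:ℕ) ∣ q := hq ▸ dvd_pow_self 2 (Nat.pos_iff_ne_zero.mp hs)
    omega
  have hQcard : Fintype.card F = q * q := by rw [hF]; ring
  have hqQ : 2 * q ≤ q * q := Nat.mul_le_mul_right q hq2
  have hn2 : n = 2 * (q * q) := by rw [hn]; ring
  -- characteristic 2
  have hchar : CharP F 2 := by
    obtain ⟨p, hp⟩ := CharP.exists F
    haveI := hp
    have hprime : p.Prime := CharP.char_is_prime F p
    haveI : Fact p.Prime := ⟨hprime⟩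
    obtain ⟨nn, _, hcard⟩ := FiniteField.card F p
    have hdvd : p ∣ 2 ^ (2 * s) := by
      have h1 : (p:ℕ) ∣ Fintype.card F := hcard ▸ dvd_pow_self p nn.ne_zero
      have h2 : Fintype.card F = 2 ^ (2*s) := by rw [hF, hq, ← pow_mul, mul_comm s 2]
      rwa [h2] at h1
    have hp2 : p = 2 := by
      have := (Nat.Prime.dvd_of_dvd_pow hprime hdvd)
      exact (Nat.prime_dvd_prime_iff_eq hprime Nat.prime_two).mp this
    rwa [hp2] at hp
  haveI := hchar
  haveI : Fact (Nat.Prime 2) := ⟨Nat.prime_two⟩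
  have h2F : (2:F) = 0 := by exact_mod_cast CharP.cast_eq_zero F 2
  have hqpow : ∀ x y : F, (x + y) ^ q = x ^ q + y ^ q := by
    intro x y; rw [hq]; exact add_pow_char_pow x y 2 s
  have hpowinj : ∀ x y : F, x ^ q = y ^ q → x = y := by
    intro x y hxy
    have h1 : (x + y) ^ q = 0 := by
      rw [hqpow, hxy]; exact CharTwo.add_self_eq_zero _
    have h2 : x + y = 0 := by
      have hq0 : q ≠ 0 := by omega
      exact pow_eq_zero_iff hq0 |>.mp h1
    have : x = -y := eq_neg_of_add_eq_zero_left h2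
    rwa [CharTwo.neg_eq] at this
  -- curve equation
  have hcurve : ∀ k, (pt k).2 ^ 2 + (pt k).2 = (pt k).1 ^ (q+1) :=
    fun k => (hrange (pt k)).mp ⟨k, rfl⟩
  -- two solutions above each a differ by 1
  have hbne : ∀ k k' : Fin n, (pt k).1 = (pt k').1 → k ≠ k' → (pt k).2 ≠ (pt k').2 := by
    intro k k' ha hne hb
    exact hne (hinj (Prod.ext ha hb))
  have hsol : ∀ k k' : Fin n, (pt k).1 = (pt k').1 → k ≠ k' → (pt k').2 = (pt k).2 + 1 := by
    intro k k' ha hne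
    have h1 := hcurve k
    have h2 := hcurve k'
    rw [← ha] at h2
    set x := (pt k).2 + (pt k').2 with hx
    have hxx : x * (x + 1) = 0 := by
      have hsq : x ^ 2 = (pt k).2 ^ 2 + (pt k').2 ^ 2 := add_pow_char _ _ 2
      have : x ^ 2 + x = 0 := by
        rw [hsq, hx]
        linear_combination h1 + h2 + ((pt k).1 ^ (q+1)) * h2F
      linear_combination this
    have hxne : x ≠ 0 := by
      intro h0
      have : (pt k).2 = (pt k').2 := by
        have := eq_neg_of_add_eq_zero_left h0
        rwa [CharTwo.neg_eq] at this
      exact hbne k k' ha hne this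
    rcases mul_eq_zero.mp hxx with h | h
    · exact absurd h hxne
    · have hx1 : x = 1 := by
        have := eq_neg_of_add_eq_zero_left h
        rw [CharTwo.neg_eq] at this
        exact this
      have : (pt k).2 + (pt k').2 = 1 := hx1
      linear_combination this - (pt k).2 * h2F
  -- fibers of the first projection have exactly two elements
  have hTale : ∀ a : F, (univ.filter (fun k => (pt k).1 = a)).card ≤ 2 := by
    intro a
    by_contra hcon
    push_neg at hcon
    obtain ⟨k1, k2, k3, h1, h2, h3, h12, h13, h23⟩ := Finset.two_lt_card_iff.mp hcon
    simp only [Finset.mem_filter, Finset.mem_univ, true_and] at h1 h2 h3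
    have e2 : (pt k2).2 = (pt k1).2 + 1 := hsol k1 k2 (by rw [h1, h2]) h12
    have e3 : (pt k3).2 = (pt k1).2 + 1 := hsol k1 k3 (by rw [h1, h3]) h13
    exact hbne k2 k3 (by rw [h2, h3]) h23 (by rw [e2, e3])
  have hTa2 : ∀ a : F, (univ.filter (fun k => (pt k).1 = a)).card = 2 := by
    by_contra hcon
    push_neg at hcon
    obtain ⟨a0, ha0⟩ := hcon
    have hfib : n = ∑ a : F, (univ.filter (fun k => (pt k).1 = a)).card := by
      have := Finset.card_eq_sum_card_fiberwise
        (f := fun k : Fin n => (pt k).1) (s := univ) (t := univ) (fun x _ => mem_univ _)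
      simpa using this
    have hlt : ∑ a : F, (univ.filter (fun k => (pt k).1 = a)).card < ∑ _a : F, 2 :=
      Finset.sum_lt_sum (fun i _ => hTale i)
        ⟨a0, mem_univ _, lt_of_le_of_ne (hTale a0) ha0⟩
    rw [← hfib] at hlt
    simp only [Finset.sum_const, Finset.card_univ, smul_eq_mul] at hlt
    rw [hQcard] at hlt
    omega
  have hpairex : ∀ a : F, ∃ k1 k2 : Fin n, k1 ≠ k2 ∧ (pt k1).1 = a ∧ (pt k2).1 = a ∧
      (pt k2).2 = (pt k1).2 + 1 ∧ ∀ k : Fin n, (pt k).1 = a → k = k1 ∨ k = k2 := by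
    intro a
    obtain ⟨k1, k2, hne, hTa⟩ := Finset.card_eq_two.mp (hTa2 a)
    have hmem : ∀ k : Fin n, (pt k).1 = a ↔ (k = k1 ∨ k = k2) := by
      intro k
      constructor
      · intro hk
        have : k ∈ univ.filter (fun k => (pt k).1 = a) := by simp [hk]
        rw [hTa] at this
        simpa using this
      · intro hk
        have : k ∈ ({k1, k2} : Finset (Fin n)) := by simpa using hk
        rw [← hTa] at this
        simpa using this
    have h1 : (pt k1).1 = a := (hmem k1).mpr (Or.inl rfl)
    have h2 : (pt k2).1 = a := (hmem k2).mpr (Or.inr rfl)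
    exact ⟨k1, k2, hne, h1, h2, hsol k1 k2 (by rw [h1, h2]) hne,
      fun k hk => (hmem k).mp hk⟩
  choose e1 e2 hee he1 he2 heb hall using hpairex
  -- summation over the curve as a double sum
  have hsum : ∀ g : F × F → F, ∑ k, g (pt k) = ∑ a : F, (g (pt (e1 a)) + g (pt (e2 a))) := by
    intro g
    rw [← Finset.sum_fiberwise univ (fun k => (pt k).1) (fun k => g (pt k))]
    refine Finset.sum_congr rfl fun a _ => ?_
    have hset : (univ.filter fun k => (pt k).1 = a) = {e1 a, e2 a} := by
      ext k
      simp only [mem_filter, mem_univ, true_and, mem_insert, mem_singleton]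
      constructor
      · exact hall a k
      · rintro (rfl | rfl)
        exacts [he1 a, he2 a]
    rw [hset, Finset.sum_pair (hee a)]
  -- basic character sums
  have hSA : ∀ e : ℕ, ∑ k, (pt k).1 ^ e = 0 := by
    intro e
    rw [hsum (fun p => p.1 ^ e)]
    refine Finset.sum_eq_zero fun a _ => ?_
    simp only [he1, he2]
    exact CharTwo.add_self_eq_zero _
  have hSB : ∀ e : ℕ, e < q*q - 1 → ∑ k, (pt k).1 ^ e * (pt k).2 = 0 := by
    intro e he
    rw [hsum (fun p => p.1 ^ e * p.2)]
    have hterm : ∀ a : F,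
        (pt (e1 a)).1 ^ e * (pt (e1 a)).2 + (pt (e2 a)).1 ^ e * (pt (e2 a)).2 = a ^ e := by
      intro a
      rw [he1, he2, heb]
      linear_combination (a ^ e * (pt (e1 a)).2) * h2F
    rw [Finset.sum_congr rfl fun a _ => hterm a]
    refine FiniteField.sum_pow_lt_card_sub_one F e ?_
    rw [hQcard]; exact he
  -- b^q identity
  have hbq : ∀ k : Fin n,
      (pt k).2 ^ q = (pt k).2 + ∑ j ∈ Finset.range s, (pt k).1 ^ ((q+1) * 2^j) := by
    intro k
    have h := aux_pow_two_pow (pt k).2 ((pt k).1 ^ (q+1)) (hcurve k) s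
    rw [← hq] at h
    rw [h]
    congr 1
    refine Finset.sum_congr rfl fun j _ => ?_
    rw [← pow_mul]
  have hSQ1 : ∀ e : ℕ, e < q*q - 1 → ∑ k, (pt k).1 ^ e * (pt k).2 ^ q = 0 := by
    intro e he
    have hrw : ∀ k : Fin n, (pt k).1 ^ e * (pt k).2 ^ q
        = (pt k).1 ^ e * (pt k).2 + ∑ j ∈ range s, (pt k).1 ^ (e + (q+1) * 2^j) := by
      intro k
      rw [hbq k, mul_add, Finset.mul_sum]
      congr 1
      exact Finset.sum_congr rfl fun j _ => (pow_add _ _ _).symm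
    rw [Finset.sum_congr rfl fun k _ => hrw k, Finset.sum_add_distrib, hSB e he,
      Finset.sum_comm]
    simp [hSA]
  have hSQ2 : ∀ e : ℕ, (2*e + (q+1)*q + 4 ≤ 2*(q*q)) →
      ∑ k, (pt k).1 ^ e * (pt k).2 ^ (q+1) = 0 := by
    intro e he
    have hebd : ∀ j : ℕ, j < s → e + (q+1) * 2^j < q*q - 1 := by
      intro j hj
      have h2j : 2 * 2^j ≤ q := by
        rw [hq]
        calc 2 * 2^j = 2^(j+1) := by ring
          _ ≤ 2^s := Nat.pow_le_pow_right (by norm_num) (by omega)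
      have : 2 * ((q+1) * 2^j) ≤ (q+1) * q := by
        calc 2 * ((q+1) * 2^j) = (q+1) * (2 * 2^j) := by ring
          _ ≤ (q+1) * q := Nat.mul_le_mul_left _ h2j
      omega
    have hrw : ∀ k : Fin n, (pt k).1 ^ e * (pt k).2 ^ (q+1)
        = (pt k).1 ^ e * (pt k).2 + (pt k).1 ^ (e + (q+1))
          + ∑ j ∈ range s, (pt k).1 ^ (e + (q+1) * 2^j) * (pt k).2 := by
      intro k
      have hb := hbq k
      have hc := hcurve k
      have hsum_rw : ∑ j ∈ range s, (pt k).1 ^ (e + (q+1) * 2^j) * (pt k).2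
          = ((pt k).1 ^ e * (pt k).2) * ∑ j ∈ range s, (pt k).1 ^ ((q+1) * 2^j) := by
        rw [Finset.mul_sum]
        refine Finset.sum_congr rfl fun j _ => ?_
        rw [pow_add]; ring
      rw [hsum_rw]
      set T := ∑ j ∈ range s, (pt k).1 ^ ((q+1) * 2^j) with hT
      set aa := (pt k).1 with haa
      set bb := (pt k).2 with hbb
      linear_combination (aa^e*bb)*hb + (aa^e)*hc - (aa^e*bb)*h2F
    rw [Finset.sum_congr rfl fun k _ => hrw k]
    rw [Finset.sum_add_distrib, Finset.sum_add_distrib]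
    rw [hSB e (by omega), hSA (e + (q+1)), Finset.sum_comm]
    have : ∀ j ∈ range s, ∑ k, (pt k).1 ^ (e + (q+1) * 2^j) * (pt k).2 = 0 := by
      intro j hj
      exact hSB _ (hebd j (Finset.mem_range.mp hj))
    rw [Finset.sum_congr rfl this]
    simp
  -- monomial orthogonality for part (a)
  have hmona : ∀ i j i' j' : ℕ, j ≤ 1 → j' ≤ 1 → 2*i + (q+1)*j ≤ m → 2*i' + (q+1)*j' ≤ m →
      ∑ k, ((pt k).1 ^ i * (pt k).2 ^ j) * ((pt k).1 ^ i' * (pt k).2 ^ j') ^ q = 0 := by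
    intro i j i' j' hj hj' hi hi'
    have hterm : ∀ k : Fin n, ((pt k).1 ^ i * (pt k).2 ^ j) * ((pt k).1 ^ i' * (pt k).2 ^ j') ^ q
        = (pt k).1 ^ (i + i'*q) * (pt k).2 ^ (j + j'*q) := by
      intro k
      rw [mul_pow, ← pow_mul, ← pow_mul, pow_add, pow_add]
      ring
    rw [Finset.sum_congr rfl fun k _ => hterm k]
    interval_cases j <;> interval_cases j'
    · -- j = 0, j' = 0
      simp only [Nat.zero_add, Nat.zero_mul, pow_zero, mul_one]
      exact hSA _
    · -- j = 0, j' = 1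
      simp only [Nat.zero_add, Nat.one_mul]
      refine hSQ1 _ ?_
      have hb1 : i + 1 ≤ q := by omega
      have hb2 : i' + 2 ≤ q := by omega
      have := aux_expbound hq2 hb1 (by omega) (Or.inr hb2)
      calc i + i' * q = i + q * i' := by ring
        _ < q * q - 1 := by omega
    · -- j = 1, j' = 0
      simp only [Nat.add_zero, Nat.zero_mul, Nat.add_zero, pow_one]
      refine hSB _ ?_
      have hb1 : i + 2 ≤ q := by omega
      have := aux_expbound hq2 (by omega) (by omega : i' + 1 ≤ q) (Or.inl hb1)
      calc i + i' * q = i + q * i' := by ring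
        _ < q * q - 1 := by omega
    · -- j = 1, j' = 1
      simp only [Nat.one_mul]
      have hcomm : 1 + q = q + 1 := by ring
      rw [hcomm]
      refine hSQ2 _ ?_
      have hb1 : 2*i + 4 ≤ q := by omega
      have hb2 : 2*i' + 4 ≤ q := by omega
      have := aux_expbound2 hb1 hb2
      calc 2*(i + i'*q) + (q+1)*q + 4 = 2*(i + q*i') + (q+1)*q + 4 := by ring
        _ ≤ 2*(q*q) := this
  -- part (a)
  have parta : ∀ u ∈ C m, ∀ v ∈ C m, ∑ k, u k * (v k) ^ q = 0 := by
    have hgen : ∀ g ∈ {v : Fin n → F | ∃ i j : ℕ, j ≤ 1 ∧ 2 * i + (q + 1) * j ≤ m ∧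
        v = fun k => (pt k).1 ^ i * (pt k).2 ^ j},
        ∀ u' ∈ C m, ∑ k, u' k * (g k) ^ q = 0 := by
      rintro g ⟨i', j', hj', hle', rfl⟩ u' hu'
      rw [hC m] at hu'
      induction hu' using Submodule.span_induction with
      | mem x hx =>
          obtain ⟨i, j, hj, hle, rfl⟩ := hx
          exact hmona i j i' j' hj hj' hle hle'
      | zero => simp
      | add x y hx hy ihx ihy =>
          simp only [Pi.add_apply, add_mul, Finset.sum_add_distrib, ihx, ihy, add_zero]
      | smul c x hx ih =>
          simp only [Pi.smul_apply, smul_eq_mul, mul_assoc, ← Finset.mul_sum, ih, mul_zero]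
    intro u hu v hv
    rw [hC m] at hv
    induction hv using Submodule.span_induction with
    | mem g hg => exact hgen g hg u hu
    | zero => simp [zero_pow (by omega : q ≠ 0)]
    | add x y hx hy ihx ihy =>
        have hpow : ∀ k : Fin n, (x + y) k ^ q = x k ^ q + y k ^ q := fun k => hqpow _ _
        calc ∑ k, u k * (x + y) k ^ q = ∑ k, (u k * x k ^ q + u k * y k ^ q) := by
              refine Finset.sum_congr rfl fun k _ => ?_
              rw [hpow k, mul_add]
          _ = 0 := by rw [Finset.sum_add_distrib, ihx, ihy, add_zero]
    | smul c x hx ih =>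
        have hpow : ∀ k : Fin n, (c • x) k ^ q = c ^ q * x k ^ q := fun k => by
          simp only [Pi.smul_apply, smul_eq_mul, mul_pow]
        calc ∑ k, u k * (c • x) k ^ q = c ^ q * ∑ k, u k * x k ^ q := by
              rw [Finset.mul_sum]
              refine Finset.sum_congr rfl fun k _ => ?_
              rw [hpow k]; ring
          _ = 0 := by rw [ih, mul_zero]
  -- monomial index sets
  set w : ℕ×ℕ → (Fin n → F) := fun p k => (pt k).1 ^ p.1 * (pt k).2 ^ p.2 with hw
  set Mon : ℕ → Finset (ℕ×ℕ) := fun μ => (Finset.range (μ+1) ×ˢ Finset.range 2).filter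
      (fun p => 2*p.1 + (q+1)*p.2 ≤ μ) with hMon
  have hMonMem : ∀ μ p, p ∈ Mon μ ↔ (p.2 ≤ 1 ∧ 2*p.1 + (q+1)*p.2 ≤ μ) := by
    intro μ p
    simp only [hMon, Finset.mem_filter, Finset.mem_product, Finset.mem_range]
    constructor
    · rintro ⟨⟨h1, h2⟩, h3⟩
      exact ⟨by omega, h3⟩
    · rintro ⟨h1, h2⟩
      have h3 := Nat.le_add_right (2*p.1) ((q+1)*p.2)
      rw [Nat.add_comm] at h3
      have h4 := Nat.le_add_left ((q+1)*p.2) (2*p.1)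
      exact ⟨⟨by omega, by omega⟩, h2⟩
  have hCspan : ∀ μ : ℕ, C μ = Submodule.span F (Set.range (fun p : {x // x ∈ Mon μ} => w p.1)) := by
    intro μ
    rw [hC μ]
    congr 1
    ext v
    simp only [Set.mem_setOf_eq, Set.mem_range]
    constructor
    · rintro ⟨i, j, hj, hle, rfl⟩
      exact ⟨⟨(i,j), (hMonMem μ (i,j)).mpr ⟨hj, hle⟩⟩, rfl⟩
    · rintro ⟨⟨p, hp⟩, rfl⟩
      obtain ⟨h1, h2⟩ := (hMonMem μ p).mp hp
      exact ⟨p.1, p.2, h1, h2, rfl⟩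
  -- linear independence of the monomial functions
  have hindep : ∀ μ : ℕ, μ ≤ 2*(q*q) - 1 →
      LinearIndependent F (fun p : {x // x ∈ Mon μ} => w p.1) := by
    intro μ hμ
    rw [Fintype.linearIndependent_iff]
    intro g hg
    set G : ℕ×ℕ → F := fun p => if h : p ∈ Mon μ then g ⟨p, h⟩ else 0 with hG
    have hGoff : ∀ p ∉ Mon μ, G p = 0 := fun p hp => dif_neg hp
    set f0 : F[X] := ∑ i ∈ Finset.range (μ/2+1), Polynomial.C (G (i,0)) * Polynomial.X ^ i with hf0
    set f1 : F[X] := ∑ i ∈ Finset.range (μ/2+1), Polynomial.C (G (i,1)) * Polynomial.X ^ i with hf1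
    have heval : ∀ k : Fin n, f0.eval (pt k).1 + f1.eval (pt k).1 * (pt k).2 = 0 := by
      intro k
      have hk := congrFun hg k
      simp only [Finset.sum_apply, Pi.smul_apply, smul_eq_mul, Pi.zero_apply] at hk
      have hconv : ∑ p : {x // x ∈ Mon μ}, g p * w p.1 k
          = ∑ p ∈ Mon μ, G p * ((pt k).1 ^ p.1 * (pt k).2 ^ p.2) := by
        rw [← Finset.sum_coe_sort (Mon μ) (fun p => G p * ((pt k).1 ^ p.1 * (pt k).2 ^ p.2))]
        refine Finset.sum_congr rfl fun p _ => ?_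
        have hGg : G p.1 = g p := by rw [hG]; exact dif_pos p.2
        rw [hGg]
      rw [hconv] at hk
      rw [aux_split G (Mon μ) hGoff ?_ ?_ ?_ (pt k).1 (pt k).2] at hk
      · exact hk
      · intro p hp
        have := ((hMonMem μ p).mp hp).1
        omega
      · intro p hp h2
        have hle := ((hMonMem μ p).mp hp).2
        rw [h2, Nat.mul_zero, Nat.add_zero] at hle
        omega
      · intro p hp h2
        have hle := ((hMonMem μ p).mp hp).2
        rw [h2, Nat.mul_one] at hle
        omega
    have hdeg0 : f0.natDegree ≤ μ/2 := by
      refine natDegree_sum_le_of_forall_le _ _ (fun i hi => ?_)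
      refine (natDegree_C_mul_le _ _).trans ?_
      rw [natDegree_X_pow]
      exact Nat.lt_succ_iff.mp (Finset.mem_range.mp hi)
    have hdeg1 : f1.natDegree ≤ μ/2 := by
      refine natDegree_sum_le_of_forall_le _ _ (fun i hi => ?_)
      refine (natDegree_C_mul_le _ _).trans ?_
      rw [natDegree_X_pow]
      exact Nat.lt_succ_iff.mp (Finset.mem_range.mp hi)
    have hcardF : μ/2 < Fintype.card F := by rw [hQcard]; omega
    have hf1z : f1 = 0 := by
      refine Polynomial.eq_zero_of_natDegree_lt_card_of_eval_eq_zero f1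
        (f := (id : F → F)) Function.injective_id ?_ ?_
      · intro a
        have hA := heval (e1 a)
        have hB := heval (e2 a)
        rw [he1] at hA
        rw [he2, heb] at hB
        have : f1.eval a = 0 := by linear_combination hB - hA
        simpa using this
      · simpa using lt_of_le_of_lt hdeg1 hcardF
    have hf0z : f0 = 0 := by
      refine Polynomial.eq_zero_of_natDegree_lt_card_of_eval_eq_zero f0
        (f := (id : F → F)) Function.injective_id ?_ ?_
      · intro a
        have hA := heval (e1 a)
        rw [he1, hf1z] at hA
        simpa using hA
      · simpa using lt_of_le_of_lt hdeg0 hcardF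
    intro p
    obtain ⟨⟨i, j⟩, hp⟩ := p
    obtain ⟨hj, hle⟩ := (hMonMem μ (i,j)).mp hp
    have hGp : G (i,j) = g ⟨(i,j), hp⟩ := dif_pos hp
    have hcoeff : ∀ c : ℕ → F, i ≤ μ/2 →
        (∑ i' ∈ Finset.range (μ/2+1), Polynomial.C (c i') * Polynomial.X ^ i').coeff i = c i := by
      intro c hi
      rw [Polynomial.finset_sum_coeff]
      have hterm : ∀ i' ∈ Finset.range (μ/2+1),
          (Polynomial.C (c i') * Polynomial.X ^ i').coeff i = if i = i' then c i' else 0 := by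
        intro i' _
        rw [Polynomial.coeff_C_mul, Polynomial.coeff_X_pow]
        simp [mul_ite]
      rw [Finset.sum_congr rfl hterm, Finset.sum_ite_eq]
      rw [if_pos (Finset.mem_range.mpr (by omega))]
    rw [← hGp]
    interval_cases j
    · have h1 : f0.coeff i = G (i,0) := by
        rw [hf0]
        refine hcoeff (fun i' => G (i',0)) ?_
        rw [Nat.mul_zero, Nat.add_zero] at hle
        omega
      rw [← h1, hf0z]
      simp
    · have h1 : f1.coeff i = G (i,1) := by
        rw [hf1]
        refine hcoeff (fun i' => G (i',1)) ?_
        rw [Nat.mul_one] at hle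
        omega
      rw [← h1, hf1z]
      simp
  -- cardinality of the monomial set
  have hcard : ∀ μ : ℕ, q - 1 ≤ μ → (Mon μ).card = μ - q/2 + 1 := by
    intro μ hμl
    have hsplit : ((Mon μ).filter (fun p => p.2 = 0)).card
        + ((Mon μ).filter (fun p => ¬p.2 = 0)).card = (Mon μ).card :=
      Finset.card_filter_add_card_filter_not _
    have hinj0 : ∀ c : ℕ, Function.Injective (fun i : ℕ => (i, c)) := by
      intro c x y h
      simpa using h
    have h0 : (Mon μ).filter (fun p => p.2 = 0) = (Finset.range (μ/2+1)).image (fun i => (i,0)) := by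
      ext p
      simp only [Finset.mem_filter, Finset.mem_image, Finset.mem_range]
      constructor
      · rintro ⟨hp, h2⟩
        obtain ⟨hj, hle⟩ := (hMonMem μ p).mp hp
        rw [h2, Nat.mul_zero, Nat.add_zero] at hle
        exact ⟨p.1, by omega, by rw [← h2]⟩
      · rintro ⟨i, hi, rfl⟩
        exact ⟨(hMonMem μ (i,0)).mpr ⟨by norm_num, by rw [Nat.mul_zero, Nat.add_zero]; omega⟩, rfl⟩
    have hc0 : ((Mon μ).filter (fun p => p.2 = 0)).card = μ/2 + 1 := by
      rw [h0, Finset.card_image_of_injective _ (hinj0 0), Finset.card_range]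
    by_cases hcase : q + 1 ≤ μ
    · have h1 : (Mon μ).filter (fun p => ¬p.2 = 0)
          = (Finset.range ((μ-q-1)/2+1)).image (fun i => (i,1)) := by
        ext p
        simp only [Finset.mem_filter, Finset.mem_image, Finset.mem_range]
        constructor
        · rintro ⟨hp, h2⟩
          obtain ⟨hj, hle⟩ := (hMonMem μ p).mp hp
          have hj1 : p.2 = 1 := by omega
          rw [hj1, Nat.mul_one] at hle
          exact ⟨p.1, by omega, by rw [← hj1]⟩
        · rintro ⟨i, hi, rfl⟩
          refine ⟨(hMonMem μ (i,1)).mpr ⟨le_refl 1, by rw [Nat.mul_one]; omega⟩, by norm_num⟩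
      have hc1 : ((Mon μ).filter (fun p => ¬p.2 = 0)).card = (μ-q-1)/2 + 1 := by
        rw [h1, Finset.card_image_of_injective _ (hinj0 1), Finset.card_range]
      rw [← hsplit, hc0, hc1]
      omega
    · have h1 : (Mon μ).filter (fun p => ¬p.2 = 0) = ∅ := by
        ext p
        simp only [Finset.mem_filter, Finset.notMem_empty, iff_false, not_and]
        intro hp h2
        obtain ⟨hj, hle⟩ := (hMonMem μ p).mp hp
        have hj1 : p.2 = 1 := by omega
        rw [hj1, Nat.mul_one] at hle
        omega
      rw [← hsplit, hc0, h1, Finset.card_empty]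
      omega
  -- part (b)
  have partb : Module.finrank F ↥(C m) = m - q/2 + 1 := by
    rw [hCspan m, finrank_span_eq_card (hindep m (by omega))]
    rw [Fintype.card_coe]
    exact hcard m hm1
  -- the dual degree
  set Mc := 2*(q*q) + q - 2 - m with hMcdef
  have hMm : m + Mc = 2*(q*q) + q - 2 := by
    have h1 := hqQ
    generalize q*q = Q at hMcdef h1 ⊢
    omega
  -- Euclidean orthogonality between monomials of C m and of C Mc
  have hmonc : ∀ i j i' j' : ℕ, j ≤ 1 → j' ≤ 1 → 2*i + (q+1)*j ≤ m → 2*i' + (q+1)*j' ≤ Mc →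
      ∑ k, ((pt k).1 ^ i * (pt k).2 ^ j) * ((pt k).1 ^ i' * (pt k).2 ^ j') = 0 := by
    intro i j i' j' hj hj' hi hi'
    have hterm : ∀ k : Fin n, ((pt k).1 ^ i * (pt k).2 ^ j) * ((pt k).1 ^ i' * (pt k).2 ^ j')
        = (pt k).1 ^ (i + i') * (pt k).2 ^ (j + j') := by
      intro k
      rw [pow_add, pow_add]
      ring
    rw [Finset.sum_congr rfl fun k _ => hterm k]
    interval_cases j <;> interval_cases j'
    · simpa using hSA (i + i')
    · simp only [show (0:ℕ)+1 = 1 from rfl, pow_one]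
      refine hSB _ ?_
      have h1 := hMm
      generalize q*q = Q at h1 ⊢
      omega
    · simp only [show (1:ℕ)+0 = 1 from rfl, pow_one]
      refine hSB _ ?_
      have h1 := hMm
      generalize q*q = Q at h1 ⊢
      omega
    · have hrw : ∀ k : Fin n, (pt k).1 ^ (i+i') * (pt k).2 ^ (1+1)
          = (pt k).1 ^ (i+i') * (pt k).2 + (pt k).1 ^ ((i+i')+(q+1)) := by
        intro k
        have hc := hcurve k
        rw [pow_add ((pt k).1) (i+i') (q+1)]
        linear_combination ((pt k).1^(i+i')) * hc - ((pt k).1^(i+i') * (pt k).2) * h2F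
      rw [Finset.sum_congr rfl fun k _ => hrw k, Finset.sum_add_distrib, hSA, add_zero]
      refine hSB _ ?_
      have h1 := hMm
      generalize q*q = Q at h1 ⊢
      omega
  -- the standard bilinear form
  set B : LinearMap.BilinForm F (Fin n → F) := LinearMap.mk₂ F (fun u v => ∑ k, u k * v k)
    (fun x y z => by simp [add_mul, Finset.sum_add_distrib])
    (fun c x y => by
      simp only [Pi.smul_apply, smul_eq_mul, Finset.mul_sum]
      exact Finset.sum_congr rfl fun k _ => by ring)
    (fun x y z => by simp [mul_add, Finset.sum_add_distrib])
    (fun c x y => by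
      simp only [Pi.smul_apply, smul_eq_mul, Finset.mul_sum]
      exact Finset.sum_congr rfl fun k _ => by ring) with hB
  have hBapp : ∀ x y : Fin n → F, B x y = ∑ k, x k * y k := by
    intro x y
    rw [hB]
    rfl
  have hBrefl : B.IsRefl := by
    intro x y h
    rw [hBapp] at h ⊢
    rw [← h]
    exact Finset.sum_congr rfl fun k _ => mul_comm _ _
  have horth : B.orthogonal ⊤ = ⊥ := by
    rw [Submodule.eq_bot_iff]
    intro x hx
    funext k
    have hxk := (LinearMap.BilinForm.mem_orthogonal_iff.mp hx) (Pi.single k 1 : Fin n → F) Submodule.mem_top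
    rw [hBapp] at hxk
    have : ∑ j, (Pi.single k 1 : Fin n → F) j * x j = x k := by
      rw [Finset.sum_congr rfl (fun j _ => by rw [Pi.single_apply])]
      rw [Finset.sum_congr rfl (fun j _ => by rw [ite_mul, one_mul, zero_mul])]
      rw [Finset.sum_ite_eq' Finset.univ k x]
      simp
    rw [this] at hxk
    exact hxk
  have hrkpi : Module.finrank F (Fin n → F) = n := by
    rw [Module.finrank_pi]
    exact Fintype.card_fin n
  have hdim : Module.finrank F ↥(C m) + Module.finrank F ↥(B.orthogonal (C m)) = n := by
    have h := LinearMap.BilinForm.finrank_add_finrank_orthogonal hBrefl (C m)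
    rw [horth, inf_bot_eq, hrkpi] at h
    rw [h, finrank_bot]
    omega
  -- C Mc is contained in the orthogonal complement of C m
  have hCMD : C Mc ≤ B.orthogonal (C m) := by
    rw [hC Mc, Submodule.span_le]
    rintro g ⟨i', j', hj', hle', rfl⟩
    rw [SetLike.mem_coe, LinearMap.BilinForm.mem_orthogonal_iff]
    intro y hy
    rw [hC m] at hy
    induction hy using Submodule.span_induction with
    | mem x hx =>
        obtain ⟨i, j, hj, hle, rfl⟩ := hx
        rw [hBapp]
        exact hmonc i j i' j' hj hj' hle hle'
    | zero =>
        rw [map_zero]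
        rfl
    | add x y hx hy ihx ihy =>
        rw [map_add, LinearMap.add_apply, ihx, ihy, add_zero]
    | smul c x hx ih =>
        rw [map_smul, LinearMap.smul_apply, ih, smul_zero]
  have hMc1 : q - 1 ≤ Mc := by
    have h1 := hMm
    generalize q*q = Q at h1 ⊢
    omega
  have hMc2 : Mc ≤ 2*(q*q) - 1 := by
    have h1 := hMm
    generalize q*q = Q at h1 ⊢
    omega
  have hrkMc : Module.finrank F ↥(C Mc) = Mc - q/2 + 1 := by
    rw [hCspan Mc, finrank_span_eq_card (hindep Mc hMc2), Fintype.card_coe]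
    exact hcard Mc hMc1
  have hDC : B.orthogonal (C m) = C Mc := by
    refine (Submodule.eq_of_le_of_finrank_le hCMD ?_).symm
    rw [hrkMc]
    have h2 : Module.finrank F ↥(B.orthogonal (C m)) = n - (m - q/2 + 1) := by
      rw [← partb]
      omega
    rw [h2, hn2]
    have h1 := hMm
    generalize q*q = Q at h1 ⊢
    omega
  -- Frobenius permutation of the points
  have hfrob : ∀ k : Fin n, ∃ k' : Fin n, pt k' = ((pt k).1 ^ q, (pt k).2 ^ q) := by
    intro k
    have h := congrArg (fun x : F => x ^ q) (hcurve k)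
    rw [hqpow] at h
    have hcc : ((pt k).2 ^ q) ^ 2 + (pt k).2 ^ q = ((pt k).1 ^ q) ^ (q + 1) := by
      calc ((pt k).2 ^ q)^2 + (pt k).2 ^ q = ((pt k).2^2)^q + (pt k).2^q := by
            rw [← pow_mul, ← pow_mul, mul_comm]
        _ = ((pt k).1 ^ (q+1))^q := h
        _ = ((pt k).1 ^ q)^(q+1) := by rw [← pow_mul, ← pow_mul, mul_comm]
    exact (hrange ((pt k).1 ^ q, (pt k).2 ^ q)).mpr hcc
  choose σ hσ using hfrob
  have hσinj : Function.Injective σ := by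
    intro k k' h
    have h2 := congrArg pt h
    rw [hσ k, hσ k'] at h2
    have ha := congrArg Prod.fst h2
    have hb := congrArg Prod.snd h2
    simp only at ha hb
    exact hinj (Prod.ext (hpowinj _ _ ha) (hpowinj _ _ hb))
  have hσbij : Function.Bijective σ := Finite.injective_iff_bijective.mp hσinj
  set σe : Fin n ≃ Fin n := Equiv.ofBijective σ hσbij with hσe
  have hσeapp : ∀ k, pt (σe k) = ((pt k).1 ^ q, (pt k).2 ^ q) := fun k => hσ k
  refine ⟨parta, partb, ?_⟩
  -- part (c)
  intro v hv hvne
  simp only [Set.mem_setOf_eq] at hv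
  set u : Fin n → F := fun k => v (σe.symm k) with hu
  have hveq : ∀ k, u (σe k) = v k := by
    intro k
    rw [hu]
    simp
  have hu_mem : u ∈ B.orthogonal (C m) := by
    rw [LinearMap.BilinForm.mem_orthogonal_iff]
    intro y hy
    rw [hC m] at hy
    induction hy using Submodule.span_induction with
    | mem x hx =>
        obtain ⟨i, j, hj, hle, rfl⟩ := hx
        rw [hBapp]
        have hre : ∑ k, ((pt k).1 ^ i * (pt k).2 ^ j) * u k
            = ∑ k, ((pt (σe k)).1 ^ i * (pt (σe k)).2 ^ j) * u (σe k) :=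
          (Equiv.sum_comp σe (fun k => ((pt k).1 ^ i * (pt k).2 ^ j) * u k)).symm
        rw [hre]
        have hterm : ∀ k : Fin n, ((pt (σe k)).1 ^ i * (pt (σe k)).2 ^ j) * u (σe k)
            = v k * (((pt k).1 ^ i * (pt k).2 ^ j)) ^ q := by
          intro k
          rw [hveq k, hσeapp k]
          simp only
          rw [mul_pow, ← pow_mul, ← pow_mul, ← pow_mul, ← pow_mul, mul_comm q i, mul_comm q j]
          ring
        rw [Finset.sum_congr rfl fun k _ => hterm k]
        exact hv _ (by rw [hC m]; exact Submodule.subset_span ⟨i, j, hj, hle, rfl⟩)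
    | zero =>
        rw [map_zero]
        rfl
    | add x y hx hy ihx ihy =>
        rw [map_add, LinearMap.add_apply, ihx, ihy, add_zero]
    | smul c x hx ih =>
        rw [map_smul, LinearMap.smul_apply, ih, smul_zero]
  rw [hDC, hCspan Mc] at hu_mem
  obtain ⟨co, hco⟩ := (Submodule.mem_span_range_iff_exists_fun F).mp hu_mem
  set G : ℕ×ℕ → F := fun p => if h : p ∈ Mon Mc then co ⟨p, h⟩ else 0 with hG
  have hGoff : ∀ p ∉ Mon Mc, G p = 0 := fun p hp => dif_neg hp
  set f0 : F[X] := ∑ i ∈ Finset.range (Mc/2+1), Polynomial.C (G (i,0)) * Polynomial.X ^ i with hf0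
  set f1 : F[X] := ∑ i ∈ Finset.range ((Mc-q-1)/2+1), Polynomial.C (G (i,1)) * Polynomial.X ^ i with hf1
  have hueval : ∀ k : Fin n, u k = f0.eval (pt k).1 + f1.eval (pt k).1 * (pt k).2 := by
    intro k
    rw [← congrFun hco k]
    simp only [Finset.sum_apply, Pi.smul_apply, smul_eq_mul]
    have hconv : ∑ p : {x // x ∈ Mon Mc}, co p * w p.1 k
        = ∑ p ∈ Mon Mc, G p * ((pt k).1 ^ p.1 * (pt k).2 ^ p.2) := by
      rw [← Finset.sum_coe_sort (Mon Mc) (fun p => G p * ((pt k).1 ^ p.1 * (pt k).2 ^ p.2))]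
      refine Finset.sum_congr rfl fun p _ => ?_
      have hGg : G p.1 = co p := by rw [hG]; exact dif_pos p.2
      rw [hGg]
    rw [hconv]
    rw [aux_split G (Mon Mc) hGoff ?_ ?_ ?_ (pt k).1 (pt k).2]
    · intro p hp
      have := ((hMonMem Mc p).mp hp).1
      omega
    · intro p hp h2
      have hle := ((hMonMem Mc p).mp hp).2
      rw [h2, Nat.mul_zero, Nat.add_zero] at hle
      omega
    · intro p hp h2
      have hle := ((hMonMem Mc p).mp hp).2
      rw [h2, Nat.mul_one] at hle
      omega
  have hne00 : ¬(f0 = 0 ∧ f1 = 0) := by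
    rintro ⟨h0, h1⟩
    apply hvne
    funext k
    have h := hueval (σe k)
    rw [hveq k, h0, h1] at h
    simpa using h
  set N : F[X] := f0^2 + f0*f1 + f1^2 * Polynomial.X^(q+1) with hN
  have hNne : N ≠ 0 := aux_N_ne_zero hqeven f0 f1 hne00
  have hdeg0 : f0.natDegree ≤ Mc/2 := by
    refine natDegree_sum_le_of_forall_le _ _ (fun i hi => ?_)
    refine (natDegree_C_mul_le _ _).trans ?_
    rw [natDegree_X_pow]
    exact Nat.lt_succ_iff.mp (Finset.mem_range.mp hi)
  have hdeg1 : f1.natDegree ≤ (Mc-q-1)/2 := by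
    refine natDegree_sum_le_of_forall_le _ _ (fun i hi => ?_)
    refine (natDegree_C_mul_le _ _).trans ?_
    rw [natDegree_X_pow]
    exact Nat.lt_succ_iff.mp (Finset.mem_range.mp hi)
  have hMcq : q + 1 ≤ Mc := by
    have h1 := hMm
    have h2 := hqQ
    generalize q*q = Q at h1 h2 ⊢
    omega
  have hNdeg : N.natDegree ≤ Mc := by
    have h1 : (f0^2).natDegree ≤ Mc := natDegree_pow_le.trans (by omega)
    have h2 : (f0*f1).natDegree ≤ Mc := natDegree_mul_le.trans (by omega)
    have h3 : (f1^2 * Polynomial.X^(q+1)).natDegree ≤ Mc := by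
      refine natDegree_mul_le.trans ?_
      rw [natDegree_X_pow]
      have := natDegree_pow_le (p := f1) (n := 2)
      omega
    rw [hN]
    exact (natDegree_add_le _ _).trans (max_le ((natDegree_add_le _ _).trans (max_le h1 h2)) h3)
  have hcount : (univ.filter (fun k => u k = 0)).card ≤ Mc := by
    have hfib := Finset.card_eq_sum_card_fiberwise (f := fun k : Fin n => (pt k).1)
      (s := univ.filter (fun k => u k = 0)) (t := univ) (fun x _ => Finset.mem_univ _)
    rw [hfib]
    refine le_trans (Finset.sum_le_sum (fun a _ => ?_)) (le_trans (aux_sum_rootMult N) hNdeg)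
    -- claim : fiber card ≤ rootMultiplicity a N
    set Za := ((univ.filter (fun k => u k = 0)).filter (fun k => (pt k).1 = a)) with hZa
    have hmemZa : ∀ k, k ∈ Za ↔ (u k = 0 ∧ (pt k).1 = a) := by
      intro k
      simp [hZa]
    have hsub : Za ⊆ {e1 a, e2 a} := by
      intro k hk
      obtain ⟨hk1, hk2⟩ := (hmemZa k).mp hk
      have := hall a k hk2
      simpa using this
    have hcard2 : Za.card ≤ 2 := by
      refine (Finset.card_le_card hsub).trans ?_
      rw [Finset.card_pair (hee a)]
    have hroot1 : 0 < Za.card → 1 ≤ N.rootMultiplicity a := by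
      intro hpos
      obtain ⟨k0, hk0⟩ := Finset.card_pos.mp hpos
      obtain ⟨hk1, hk2⟩ := (hmemZa k0).mp hk0
      have hu0 : f0.eval a + f1.eval a * (pt k0).2 = 0 := by
        rw [← hk2, ← hueval k0]
        exact hk1
      have hcc := hcurve k0
      rw [hk2] at hcc
      have hroot : N.eval a = 0 := by
        rw [hN]
        simp only [Polynomial.eval_add, Polynomial.eval_mul, Polynomial.eval_pow,
          Polynomial.eval_X]
        linear_combination (f0.eval a + f1.eval a * (pt k0).2 + f1.eval a) * hu0
          + (f1.eval a)^2 * hcc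
          - (f0.eval a * f1.eval a * (pt k0).2) * h2F
          + ((f1.eval a)^2 * a^(q+1) - (f1.eval a)^2 * (pt k0).2 - (f1.eval a)^2 * ((pt k0).2)^2) * h2F
      exact (Polynomial.rootMultiplicity_pos hNne).mpr hroot
    have hroot2 : Za.card = 2 → 2 ≤ N.rootMultiplicity a := by
      intro h2c
      have hZaeq : Za = {e1 a, e2 a} := by
        refine Finset.eq_of_subset_of_card_le hsub ?_
        rw [Finset.card_pair (hee a), h2c]
      have hu1 : u (e1 a) = 0 := ((hmemZa (e1 a)).mp (by rw [hZaeq]; simp)).1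
      have hu2 : u (e2 a) = 0 := ((hmemZa (e2 a)).mp (by rw [hZaeq]; simp)).1
      rw [hueval, he1] at hu1
      rw [hueval, he2, heb] at hu2
      have hf1a : f1.eval a = 0 := by linear_combination hu2 - hu1
      have hf0a : f0.eval a = 0 := by linear_combination hu1 - (pt (e1 a)).2 * hf1a
      have d0 : Polynomial.X - Polynomial.C a ∣ f0 := Polynomial.dvd_iff_isRoot.mpr hf0a
      have d1 : Polynomial.X - Polynomial.C a ∣ f1 := Polynomial.dvd_iff_isRoot.mpr hf1a
      have hdvd : (Polynomial.X - Polynomial.C a)^2 ∣ N := by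
        rw [hN]
        refine dvd_add (dvd_add ?_ ?_) ?_
        · exact pow_dvd_pow_of_dvd d0 2
        · rw [sq]
          exact mul_dvd_mul d0 d1
        · exact Dvd.dvd.mul_right (pow_dvd_pow_of_dvd d1 2) _
      exact (Polynomial.le_rootMultiplicity_iff hNne).mpr hdvd
    rcases Nat.lt_or_ge Za.card 1 with hc | hc
    · omega
    rcases Nat.lt_or_ge Za.card 2 with hc2 | hc2
    · have := hroot1 (by omega)
      omega
    · have := hroot2 (by omega)
      omega
  have hsplitc : (univ.filter (fun k => u k = 0)).card
      + (univ.filter (fun k => ¬u k = 0)).card = n := by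
    rw [Finset.card_filter_add_card_filter_not, Finset.card_univ, Fintype.card_fin]
  have hsupp : Nat.card {k : Fin n // v k ≠ 0} = (univ.filter (fun k => ¬u k = 0)).card := by
    rw [Nat.card_eq_fintype_card, Fintype.card_subtype]
    refine Finset.card_bij (fun k _ => σe k) ?_ ?_ ?_
    · intro k hk
      simp only [Finset.mem_filter, Finset.mem_univ, true_and] at hk ⊢
      rw [hveq k]
      exact hk
    · intro k1 _ k2 _ h
      exact σe.injective h
    · intro k hk
      simp only [Finset.mem_filter, Finset.mem_univ, true_and] at hk
      refine ⟨σe.symm k, ?_, by simp⟩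
      simp only [Finset.mem_filter, Finset.mem_univ, true_and]
      rwa [← hveq (σe.symm k), Equiv.apply_symm_apply]
  rw [hsupp]
  have h1 := hMm
  have h2 := hn2
  generalize q*q = Q at h1 h2 ⊢
  omega
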